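/- arXiv:1604.01152 — 3 statements merged into one kernel-verified Lean document; each statement's English description precedes it below -/
import Mathlib

section
/- Let f, g : ℍ → ℂ be functions on the complex upper half-plane admitting, for every z ∈ ℍ, absolutely convergent expansions f(z) = Σ_{n=1}^∞ a_n exp(2πi n z) and g(z) = Σ_{n=0}^∞ b_n exp(2πi n z) with complex coefficients a_n, b_n. Define f^ρ(z) = conj(f(−conj(z))). Then for every real y > 0, ∫_0^1 conj(f^ρ(x+iy)) · g(x+iy) dx = Σ_{n=1}^∞ a_n b_n exp(−4πny). -/
open Complex UpperHalfPlane Real MeasureTheory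

/-- The point `x + i y` of the upper half-plane, for `y > 0`. -/
noncomputable def mkH (x y : ℝ) (hy : 0 < y) : UpperHalfPlane :=
  UpperHalfPlane.mk (⟨x, y⟩ : ℂ) hy

/-- The point `-conj z` of the upper half-plane, for `z` in the upper half-plane. -/
noncomputable def negConjH (z : UpperHalfPlane) : UpperHalfPlane :=
  UpperHalfPlane.mk (-(starRingEnd ℂ (z : ℂ)))
    (by simpa using z.im_pos)

/-- The function `f^ρ(z) = conj (f (-conj z))`. -/
noncomputable def rhoForm (f : UpperHalfPlane → ℂ) : UpperHalfPlane → ℂ :=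
  fun z => starRingEnd ℂ (f (negConjH z))

lemma exp_split (r x y : ℝ) : Complex.exp (2*π*Complex.I*r*(x + y*Complex.I))
    = Complex.exp (2*π*Complex.I*r*x) * Real.exp (-(2*π*r*y)) := by
  rw [Complex.ofReal_exp, ← Complex.exp_add]
  congr 1
  push_cast
  linear_combination (2*(π:ℂ)*r*y) * Complex.I_sq

lemma norm_exp_aux (r x y : ℝ) : ‖Complex.exp (2*π*Complex.I*(r:ℂ)*((x:ℂ) + (y:ℂ)*Complex.I))‖
    = Real.exp (-(2*π*r*y)) := by
  rw [exp_split, norm_mul]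
  have h1 : ‖Complex.exp (2*π*Complex.I*(r:ℂ)*(x:ℂ))‖ = 1 := by
    rw [Complex.norm_exp]
    have : (2*↑π*Complex.I*(r:ℂ)*(x:ℂ)).re = 0 := by simp
    rw [this, Real.exp_zero]
  rw [h1, one_mul, Complex.norm_real, Real.norm_eq_abs, abs_of_pos (Real.exp_pos _)]

lemma key_int (k : ℤ) :
    (∫ x in (0:ℝ)..1, Complex.exp (2*π*Complex.I*(k:ℂ)*(x:ℂ))) = if k = 0 then 1 else 0 := by
  by_cases hk : k = 0
  · simp [hk]
  · rw [if_neg hk]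
    have hc : (2*π*Complex.I*(k:ℂ)) ≠ 0 := by
      simp [Real.pi_ne_zero, Complex.I_ne_zero, hk]
    rw [intervalIntegral.integral_congr (g := fun x : ℝ => Complex.exp ((2*↑π*Complex.I*(k:ℂ)) * (x:ℂ)))
      (fun x _ => rfl), integral_exp_mul_complex hc]
    have h1 : Complex.exp ((2*(π:ℂ)*Complex.I*(k:ℂ)) * ((1:ℝ):ℂ)) = 1 := by
      rw [show (2*(π:ℂ)*Complex.I*(k:ℂ)) * ((1:ℝ):ℂ) = (k:ℂ) * (2*π*Complex.I) by push_cast; ring]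
      exact Complex.exp_int_mul_two_pi_mul_I k
    have h0 : Complex.exp ((2*(π:ℂ)*Complex.I*(k:ℂ)) * ((0:ℝ):ℂ)) = 1 := by
      norm_num
    rw [h1, h0, sub_self, zero_div]

/-- If `f(z) = Σ_{n≥1} a_n e^{2πinz}` and `g(z) = Σ_{n≥0} b_n e^{2πinz}` are absolutely
convergent expansions on the upper half-plane, then for every `y > 0`,
`∫_0^1 conj(f^ρ(x+iy)) g(x+iy) dx = Σ_{n≥1} a_n b_n e^{-4πny}`. -/
theorem statement0 (f g : UpperHalfPlane → ℂ) (a b : ℕ → ℂ)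
    (hfa : ∀ z : UpperHalfPlane,
      Summable fun n : ℕ => ‖a (n + 1) * Complex.exp (2 * π * Complex.I * (n + 1) * (z : ℂ))‖)
    (hf : ∀ z : UpperHalfPlane,
      f z = ∑' n : ℕ, a (n + 1) * Complex.exp (2 * π * Complex.I * (n + 1) * (z : ℂ)))
    (hgb : ∀ z : UpperHalfPlane,
      Summable fun n : ℕ => ‖b n * Complex.exp (2 * π * Complex.I * n * (z : ℂ))‖)
    (hg : ∀ z : UpperHalfPlane,
      g z = ∑' n : ℕ, b n * Complex.exp (2 * π * Complex.I * n * (z : ℂ)))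
    (y : ℝ) (hy : 0 < y) :
    ∫ x in (0 : ℝ)..1, (starRingEnd ℂ) (rhoForm f (mkH x y hy)) * g (mkH x y hy)
      = ∑' n : ℕ, a (n + 1) * b (n + 1) * Real.exp (-4 * π * (n + 1) * y) := by
  have hcoe : ∀ x : ℝ, ((mkH x y hy : UpperHalfPlane) : ℂ) = (x:ℂ) + (y:ℂ)*Complex.I := by
    intro x; simp [mkH, Complex.mk_eq_add_mul_I]
  have hcoe2 : ∀ x : ℝ, ((negConjH (mkH x y hy) : UpperHalfPlane) : ℂ)
      = ((-x : ℝ):ℂ) + (y:ℂ)*Complex.I := by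
    intro x; simp [negConjH, mkH, Complex.ext_iff]
  set F : ℕ × ℕ → ℝ → ℂ := fun p x =>
    (a (p.1+1) * Complex.exp (2*π*Complex.I*(((p.1+1:ℕ) : ℝ):ℂ)*(((-x:ℝ):ℂ) + (y:ℂ)*Complex.I))) *
    (b p.2 * Complex.exp (2*π*Complex.I*((p.2 : ℝ):ℂ)*((x:ℂ) + (y:ℂ)*Complex.I))) with hF
  have hint : ∀ x : ℝ, (starRingEnd ℂ) (rhoForm f (mkH x y hy)) * g (mkH x y hy)
      = ∑' p : ℕ × ℕ, F p x := by
    intro x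
    have h1 : (starRingEnd ℂ) (rhoForm f (mkH x y hy)) = f (negConjH (mkH x y hy)) := by
      simp [rhoForm]
    rw [h1, hf, hg, hcoe, hcoe2]
    have hs1 := hfa (negConjH (mkH x y hy))
    have hs2 := hgb (mkH x y hy)
    rw [show ((negConjH (mkH x y hy) : UpperHalfPlane) : ℂ) = ((-x : ℝ):ℂ) + (y:ℂ)*Complex.I
      from hcoe2 x] at hs1
    rw [show ((mkH x y hy : UpperHalfPlane) : ℂ) = (x:ℂ) + (y:ℂ)*Complex.I from hcoe x] at hs2
    rw [tsum_mul_tsum_of_summable_norm hs1 hs2]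
    apply tsum_congr; intro p
    simp only [hF]
    norm_cast
  set Bnd : ℕ × ℕ → ℝ := fun p =>
    (‖a (p.1+1)‖ * Real.exp (-(2*π*(p.1+1)*y))) * (‖b p.2‖ * Real.exp (-(2*π*p.2*y))) with hB
  have hnorm : ∀ p x, ‖F p x‖ = Bnd p := by
    intro p x
    rw [hF, hB]
    simp only [norm_mul, norm_exp_aux]
    push_cast
    ring
  have hBs : Summable Bnd := by
    have h1 : Summable (fun n : ℕ => ‖a (n+1)‖ * Real.exp (-(2*π*(n+1)*y))) := by
      apply (hfa (mkH 0 y hy)).congr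
      intro n
      rw [show ((mkH 0 y hy : UpperHalfPlane) : ℂ) = ((0:ℝ):ℂ) + (y:ℂ)*Complex.I from hcoe 0]
      rw [norm_mul, show (2*(π:ℂ)*Complex.I*((n:ℂ)+1)*(((0:ℝ):ℂ) + (y:ℂ)*Complex.I))
        = 2*π*Complex.I*((((n+1:ℕ)):ℝ):ℂ)*(((0:ℝ):ℂ) + (y:ℂ)*Complex.I) from by push_cast; ring,
        norm_exp_aux]
      first
      | (push_cast; ring)
      | push_cast
    have h2 : Summable (fun n : ℕ => ‖b n‖ * Real.exp (-(2*π*n*y))) := by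
      apply (hgb (mkH 0 y hy)).congr
      intro n
      rw [show ((mkH 0 y hy : UpperHalfPlane) : ℂ) = ((0:ℝ):ℂ) + (y:ℂ)*Complex.I from hcoe 0]
      rw [norm_mul, show (2*(π:ℂ)*Complex.I*(n:ℂ)*(((0:ℝ):ℂ) + (y:ℂ)*Complex.I))
        = 2*π*Complex.I*(((n:ℕ):ℝ):ℂ)*(((0:ℝ):ℂ) + (y:ℂ)*Complex.I) from by push_cast; ring,
        norm_exp_aux]
      try first
      | (push_cast; ring)
      | push_cast
    exact h1.mul_of_nonneg h2
      (fun n => mul_nonneg (norm_nonneg _) (Real.exp_pos _).le)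
      (fun n => mul_nonneg (norm_nonneg _) (Real.exp_pos _).le)
  have hFcont : ∀ p : ℕ × ℕ, Continuous (F p) := by
    intro p
    rw [hF]
    fun_prop
  have hFint : ∀ p : ℕ × ℕ, Integrable (F p) (volume.restrict (Set.Ioc (0:ℝ) 1)) :=
    fun p => (hFcont p).integrableOn_Ioc
  have hFnormint : Summable (fun p : ℕ × ℕ => ∫ x in Set.Ioc (0:ℝ) 1, ‖F p x‖) := by
    apply hBs.congr
    intro p
    simp [hnorm p]
  have hswap : (∫ x in (0:ℝ)..1, ∑' p : ℕ × ℕ, F p x) = ∑' p : ℕ × ℕ, ∫ x in (0:ℝ)..1, F p x := by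
    rw [intervalIntegral.integral_of_le zero_le_one,
      ← MeasureTheory.integral_tsum_of_summable_integral_norm hFint hFnormint]
    exact tsum_congr fun p => (intervalIntegral.integral_of_le zero_le_one).symm
  set G : ℕ × ℕ → ℂ := fun p => if p.2 = p.1 + 1 then
      a (p.1+1) * b p.2 * (Real.exp (-(2*π*(p.1+1)*y)) : ℝ) * (Real.exp (-(2*π*p.2*y)) : ℝ)
    else 0 with hG
  have hcompute : ∀ p : ℕ × ℕ, (∫ x in (0:ℝ)..1, F p x) = G p := by
    intro p
    obtain ⟨m, n⟩ := p
    set K : ℤ := (n : ℤ) - (m + 1) with hK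
    have hFx : ∀ x : ℝ, F (m, n) x =
        (a (m+1) * b n * (Real.exp (-(2*π*(m+1)*y)) : ℝ) * (Real.exp (-(2*π*n*y)) : ℝ)) *
          Complex.exp (2*π*Complex.I*(K:ℂ)*(x:ℂ)) := by
      intro x
      rw [hF]
      simp only
      rw [exp_split ((m+1:ℕ):ℝ) (-x) y, exp_split ((n:ℕ):ℝ) x y]
      rw [show (a (m+1) * (Complex.exp (2*π*Complex.I*(((m+1:ℕ):ℝ):ℂ)*((-x:ℝ):ℂ)) *
            ((Real.exp (-(2*π*((m+1:ℕ):ℝ)*y)) : ℝ):ℂ))) *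
          (b n * (Complex.exp (2*π*Complex.I*(((n:ℕ):ℝ):ℂ)*((x:ℝ):ℂ)) *
            ((Real.exp (-(2*π*((n:ℕ):ℝ)*y)) : ℝ):ℂ)))
        = (a (m+1) * b n * ((Real.exp (-(2*π*((m+1:ℕ):ℝ)*y)) : ℝ):ℂ) *
            ((Real.exp (-(2*π*((n:ℕ):ℝ)*y)) : ℝ):ℂ)) *
          (Complex.exp (2*π*Complex.I*(((m+1:ℕ):ℝ):ℂ)*((-x:ℝ):ℂ)) *
            Complex.exp (2*π*Complex.I*(((n:ℕ):ℝ):ℂ)*((x:ℝ):ℂ))) from by ring,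
        ← Complex.exp_add]
      have : 2*(π:ℂ)*Complex.I*(((m+1:ℕ):ℝ):ℂ)*((-x:ℝ):ℂ) + 2*π*Complex.I*(((n:ℕ):ℝ):ℂ)*((x:ℝ):ℂ)
          = 2*π*Complex.I*(K:ℂ)*(x:ℂ) := by
        rw [hK]; push_cast; ring
      rw [this]
      push_cast
      ring
    rw [intervalIntegral.integral_congr (fun x _ => hFx x),
      intervalIntegral.integral_const_mul, key_int K]
    simp only [hG]
    have hiff : K = 0 ↔ n = m + 1 := by rw [hK]; omega
    by_cases hn : n = m + 1
    · rw [if_pos (hiff.mpr hn), if_pos hn, mul_one]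
      try first
      | (push_cast; ring)
      | push_cast
    · rw [if_neg (fun h => hn (hiff.mp h)), if_neg hn, mul_zero]
  have hGs : Summable G := by
    apply Summable.of_norm_bounded hBs
    intro p
    simp only [hG, hB]
    by_cases hp : p.2 = p.1 + 1
    · rw [if_pos hp]
      simp only [norm_mul, Complex.norm_real, Real.norm_eq_abs, abs_of_pos (Real.exp_pos _)]
      push_cast
      apply le_of_eq
      ring
    · rw [if_neg hp]
      simp only [norm_zero]
      positivity
  calc (∫ x in (0:ℝ)..1, (starRingEnd ℂ) (rhoForm f (mkH x y hy)) * g (mkH x y hy))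
      = ∫ x in (0:ℝ)..1, ∑' p : ℕ × ℕ, F p x := by
        exact intervalIntegral.integral_congr (fun x _ => hint x)
    _ = ∑' p : ℕ × ℕ, ∫ x in (0:ℝ)..1, F p x := hswap
    _ = ∑' p : ℕ × ℕ, G p := tsum_congr hcompute
    _ = ∑' m : ℕ, ∑' n : ℕ, G (m, n) := by
        exact Summable.tsum_prod' hGs (fun m => (hGs.prod_factor m))
    _ = ∑' n : ℕ, a (n + 1) * b (n + 1) * Real.exp (-4 * π * (n + 1) * y) := by
        apply tsum_congr; intro m
        have : (fun n : ℕ => G (m, n)) = fun n : ℕ => if n = m + 1 then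
            a (m+1) * b (m+1) * ((Real.exp (-4 * π * (m+1) * y) : ℝ) : ℂ) else 0 := by
          funext n
          simp only [hG]
          by_cases hn : n = m + 1
          · subst hn
            rw [if_pos rfl, if_pos rfl, mul_assoc, ← Complex.ofReal_mul, ← Real.exp_add]
            congr 1
            rw [Complex.ofReal_inj, Real.exp_eq_exp]
            push_cast
            ring
          · simp [hn]
        rw [this, tsum_ite_eq]
end

section
/- Let k, N, d be positive integers, let q be a prime with q ∣ N and gcd(d, q) = 1, and let f be a cusp form of weight k for Γ0(N). Then Tr^{Nd}_{Nd/q}(f∣[k]B_d) = (Tr^N_{N/q}(f))∣[k]B_d, where (f∣[k]B_d)(z) = d^{k/2} f(dz) is a cusp form of weight k for Γ0(Nd) and Tr^N_{N/q}(f) is a cusp form of weight k for Γ0(N/q). -/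
set_option synthInstance.maxHeartbeats 400000
set_option maxHeartbeats 800000


open Complex UpperHalfPlane
open scoped MatrixGroups ModularForm

/-- `f : ℍ → ℂ` is a cusp form of weight `k` for `Γ0(N)`: holomorphic, slash-invariant
under `Γ0(N)`, and `f ∣[k] γ` tends to `0` as `Im z → ∞` for every `γ ∈ SL₂(ℤ)`. -/
def IsCuspForm (N : ℕ) (k : ℤ) (f : UpperHalfPlane → ℂ) : Prop :=
  ∃ F : CuspForm (CongruenceSubgroup.Gamma0 N) k, ⇑F = f

/-- `R` is a finite set of representatives in `Γ0(M)` for the right cosets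
`Γ0(N)\Γ0(M)`. -/
def IsGamma0Reps (N M : ℕ) (R : Finset SL(2, ℤ)) : Prop :=
  (∀ γ ∈ R, γ ∈ CongruenceSubgroup.Gamma0 M) ∧
  ∀ δ : SL(2, ℤ), δ ∈ CongruenceSubgroup.Gamma0 M →
    ∃! γ : SL(2, ℤ), γ ∈ R ∧ δ * γ⁻¹ ∈ CongruenceSubgroup.Gamma0 N

/-- The point `t z` of the upper half-plane, for `t > 0` real. -/
noncomputable def scaleH (t : ℝ) (ht : 0 < t) (z : UpperHalfPlane) : UpperHalfPlane :=
  UpperHalfPlane.mk ((t : ℂ) * (z : ℂ))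
    (by rw [Complex.im_ofReal_mul]; exact mul_pos ht z.im_pos)

/-- The slash of `f` by `B_d = (d 0; 0 1)` in weight `k`: `z ↦ d^{k/2} f(dz)`. -/
noncomputable def slashBd (d : ℕ) (hd : 0 < d) (k : ℕ) (f : UpperHalfPlane → ℂ) :
    UpperHalfPlane → ℂ :=
  fun z => (((d : ℝ) ^ ((k : ℝ) / 2) : ℝ) : ℂ) * f (scaleH (d : ℝ) (by exact_mod_cast hd) z)

/-! ### Auxiliary material -/

section Aux

open Matrix Matrix.SpecialLinearGroup CongruenceSubgroup Finset

lemma sl_det (γ : SL(2,ℤ)) : γ.1 0 0 * γ.1 1 1 - γ.1 0 1 * γ.1 1 0 = 1 := by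
  have := γ.2; rwa [Matrix.det_fin_two] at this

def mkSL (a b c e : ℤ) (h : a * e - b * c = 1) : SL(2, ℤ) :=
  ⟨!![a, b; c, e], by rw [Matrix.det_fin_two_of]; exact h⟩

@[simp] lemma mkSL_00 (a b c e : ℤ) (h) : (mkSL a b c e h).1 0 0 = a := by simp [mkSL]
@[simp] lemma mkSL_01 (a b c e : ℤ) (h) : (mkSL a b c e h).1 0 1 = b := by simp [mkSL]
@[simp] lemma mkSL_10 (a b c e : ℤ) (h) : (mkSL a b c e h).1 1 0 = c := by simp [mkSL]
@[simp] lemma mkSL_11 (a b c e : ℤ) (h) : (mkSL a b c e h).1 1 1 = e := by simp [mkSL]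

lemma mul_10 (γ δ : SL(2,ℤ)) : (γ * δ).1 1 0 = γ.1 1 0 * δ.1 0 0 + γ.1 1 1 * δ.1 1 0 := by
  show (γ.1 * δ.1) 1 0 = _
  rw [Matrix.mul_apply, Fin.sum_univ_two]

lemma mul_01 (γ δ : SL(2,ℤ)) : (γ * δ).1 0 1 = γ.1 0 0 * δ.1 0 1 + γ.1 0 1 * δ.1 1 1 := by
  show (γ.1 * δ.1) 0 1 = _
  rw [Matrix.mul_apply, Fin.sum_univ_two]

lemma mul_inv_10 (γ δ : SL(2,ℤ)) :
    (γ * δ⁻¹).1 1 0 = γ.1 1 0 * δ.1 1 1 - γ.1 1 1 * δ.1 1 0 := by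
  rw [mul_10, SL2_inv_expl δ]
  simp
  ring

lemma mem_Gamma0_iff (n : ℕ) (γ : SL(2,ℤ)) : γ ∈ Gamma0 n ↔ (n:ℤ) ∣ γ.1 1 0 := by
  rw [Gamma0_mem, ZMod.intCast_zmod_eq_zero_iff_dvd]

lemma exists_coprime_step (a b c : ℤ) (hc : c ≠ 0)
    (h : Int.gcd (Int.gcd a b : ℤ) c = 1) :
    ∃ x : ℤ, Int.gcd (a + b * x) c = 1 := by
  set S : Finset ℕ := c.natAbs.primeFactors.filter (fun p => ¬ (p:ℤ) ∣ a) with hS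
  set X : ℕ := ∏ p ∈ S, p with hX
  refine ⟨(X : ℤ), ?_⟩
  by_contra hg
  obtain ⟨q, hqp, hqd⟩ := Nat.exists_prime_and_dvd hg
  have h1 : (q:ℤ) ∣ a + b * X := dvd_trans (Int.natCast_dvd_natCast.mpr hqd) (Int.gcd_dvd_left _ _)
  have h2 : (q:ℤ) ∣ c := dvd_trans (Int.natCast_dvd_natCast.mpr hqd) (Int.gcd_dvd_right _ _)
  by_cases hqa : (q:ℤ) ∣ a
  · have hbx : (q:ℤ) ∣ b * X := by
      have := dvd_sub h1 hqa
      simpa using this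
    rcases ((Nat.prime_iff_prime_int.mp hqp).dvd_mul.mp hbx) with hb | hx
    · have : (q:ℤ) ∣ (Int.gcd a b : ℤ) := Int.dvd_coe_gcd hqa hb
      have : (q:ℤ) ∣ (Int.gcd (Int.gcd a b : ℤ) c : ℤ) := Int.dvd_coe_gcd this h2
      rw [h] at this
      exact hqp.one_lt.ne' (by exact_mod_cast Int.eq_one_of_dvd_one (by norm_num) this)
    · have hqX : q ∣ X := Int.natCast_dvd_natCast.mp (by simpa using hx)
      have : ∃ p ∈ S, q ∣ p := (Nat.Prime.prime hqp).exists_mem_finset_dvd hqX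
      obtain ⟨p, hpS, hqp'⟩ := this
      have hp : p.Prime := (Nat.mem_primeFactors.mp (Finset.mem_filter.mp hpS).1).1
      have : q = p := (Nat.prime_dvd_prime_iff_eq hqp hp).mp hqp'
      subst this
      exact (Finset.mem_filter.mp hpS).2 hqa
  · have hqS : q ∈ S := by
      refine Finset.mem_filter.mpr ⟨Nat.mem_primeFactors.mpr ⟨hqp, ?_, by simpa using hc⟩, hqa⟩
      rwa [← Int.natAbs_dvd_natAbs, Int.natAbs_natCast] at h2
    have hqX : (q:ℤ) ∣ (X:ℤ) := Int.natCast_dvd_natCast.mpr (Finset.dvd_prod_of_mem _ hqS)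
    have : (q:ℤ) ∣ a := by
      have := dvd_sub h1 (Dvd.dvd.mul_left hqX b)
      simpa using this
    exact hqa this

lemma exists_u (N q d : ℕ) (hN : 0 < N) (hq : q.Prime) (hqN : q ∣ N)
    (hdq : Nat.gcd d q = 1) (δ : SL(2,ℤ))
    (hδ : ((N/q : ℕ) : ℤ) ∣ δ.1 1 0) :
    ∃ u : SL(2,ℤ),
      (N:ℤ) ∣ u.1 1 0 ∧ (d:ℤ) ∣ (u * δ).1 0 1 := by
  by_cases hb : (d:ℤ) ∣ δ.1 0 1
  · exact ⟨1, by simp, by simpa using hb⟩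
  set a := δ.1 0 0 with ha
  set b := δ.1 0 1 with hbb
  set c := δ.1 1 0 with hcc
  set e := δ.1 1 1 with he
  have hdet : a * e - b * c = 1 := sl_det δ
  have hbne : b ≠ 0 := fun h => hb (h ▸ dvd_zero _)
  have hcop : Int.gcd (Int.gcd e d : ℤ) (b * N) = 1 := by
    by_contra hg
    obtain ⟨ℓ, hlp, hld⟩ := Nat.exists_prime_and_dvd hg
    have hle : (ℓ:ℤ) ∣ e :=
      dvd_trans (dvd_trans (Int.natCast_dvd_natCast.mpr hld) (Int.gcd_dvd_left _ _)) (Int.gcd_dvd_left _ _)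
    have hldd : (ℓ:ℤ) ∣ (d:ℤ) :=
      dvd_trans (dvd_trans (Int.natCast_dvd_natCast.mpr hld) (Int.gcd_dvd_left _ _)) (Int.gcd_dvd_right _ _)
    have hlbN : (ℓ:ℤ) ∣ b * N :=
      dvd_trans (Int.natCast_dvd_natCast.mpr hld) (Int.gcd_dvd_right _ _)
    have hlprime : Prime (ℓ:ℤ) := Nat.prime_iff_prime_int.mp hlp
    rcases hlprime.dvd_mul.mp hlbN with hlb | hlN
    · exact hlprime.not_dvd_one (hdet ▸ dvd_sub (Dvd.dvd.mul_left hle a) (Dvd.dvd.mul_right hlb c))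
    · have hlN' : ℓ ∣ N := Int.natCast_dvd_natCast.mp hlN
      have hld' : ℓ ∣ d := Int.natCast_dvd_natCast.mp hldd
      have hlq : ¬ ℓ ∣ q := by
        intro hlq
        have : ℓ ∣ Nat.gcd d q := Nat.dvd_gcd hld' hlq
        rw [hdq] at this
        exact hlp.one_lt.ne' (Nat.dvd_one.mp this)
      have hlNq : ℓ ∣ N / q := by
        have hNe : q * (N / q) = N := Nat.mul_div_cancel' hqN
        rcases (Nat.Prime.dvd_mul hlp).mp (hNe ▸ hlN') with h' | h'
        · exact absurd h' hlq
        · exact h'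
      have hlc : (ℓ:ℤ) ∣ c := dvd_trans (Int.natCast_dvd_natCast.mpr hlNq) hδ
      exact hlprime.not_dvd_one
        (hdet ▸ dvd_sub (Dvd.dvd.mul_left hle a) (Dvd.dvd.mul_left hlc b))
  have hbN : (b * N : ℤ) ≠ 0 := mul_ne_zero hbne (by exact_mod_cast hN.ne')
  obtain ⟨x, hx⟩ := exists_coprime_step e d (b * N) hbN hcop
  set p := e + d * x with hp
  have hcop' : IsCoprime p (b * N) := Int.isCoprime_iff_gcd_eq_one.mpr hx
  obtain ⟨u, v, huv⟩ := hcop'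
  have hdet' : p * u - (-b) * (N * v) = 1 := by linarith [huv]
  refine ⟨mkSL p (-b) (N * v) u hdet', ?_, ?_⟩
  · simp
  · rw [mul_01]
    simp only [mkSL_00, mkSL_01]
    have : p * b + -b * e = d * (x * b) := by rw [hp]; ring
    rw [← hbb, ← he, this]
    exact Dvd.intro _ rfl

/-- Conjugation of `γ` by `B_d`, when `d` divides the lower-left entry. -/
def conjD (d : ℤ) (γ : SL(2,ℤ)) (hc : d ∣ γ.1 1 0) : SL(2,ℤ) :=
  mkSL (γ.1 0 0) (γ.1 0 1 * d) (γ.1 1 0 / d) (γ.1 1 1) (by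
    have h := sl_det γ
    have h2 : d * (γ.1 1 0 / d) = γ.1 1 0 := Int.mul_ediv_cancel' hc
    linear_combination h - γ.1 0 1 * h2)

/-- Conjugation of `w` by `B_d⁻¹`, when `d` divides the upper-right entry. -/
def conjU (d : ℤ) (hd : d ≠ 0) (w : SL(2,ℤ)) (hb : d ∣ w.1 0 1) : SL(2,ℤ) :=
  mkSL (w.1 0 0) (w.1 0 1 / d) (w.1 1 0 * d) (w.1 1 1) (by
    have h := sl_det w
    have h2 : d * (w.1 0 1 / d) = w.1 0 1 := Int.mul_ediv_cancel' hb
    linear_combination h - w.1 1 0 * h2)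

lemma conjD_conjU (d : ℤ) (hd : d ≠ 0) (w : SL(2,ℤ)) (hb : d ∣ w.1 0 1)
    (h : d ∣ (conjU d hd w hb).1 1 0) : conjD d (conjU d hd w hb) h = w := by
  apply Subtype.ext
  ext i j
  fin_cases i <;> fin_cases j <;>
    simp [conjD, conjU, Int.ediv_mul_cancel hb, Int.mul_ediv_cancel _ hd]

lemma conj_lowerleft (d : ℤ) (γ γ' : SL(2,ℤ)) (hc : d ∣ γ.1 1 0) (hc' : d ∣ γ'.1 1 0) :
    (γ * γ'⁻¹).1 1 0 = d * ((conjD d γ hc * (conjD d γ' hc')⁻¹).1 1 0) := by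
  rw [mul_inv_10, mul_inv_10]
  simp only [conjD, mkSL_10, mkSL_11]
  have h2 : d * (γ.1 1 0 / d) = γ.1 1 0 := Int.mul_ediv_cancel' hc
  have h2' : d * (γ'.1 1 0 / d) = γ'.1 1 0 := Int.mul_ediv_cancel' hc'
  linear_combination -γ'.1 1 1 * h2 + γ.1 1 1 * h2'

@[simp] lemma scaleH_coe (t : ℝ) (ht : 0 < t) (z : ℍ) :
    ((scaleH t ht z : ℍ) : ℂ) = (t : ℂ) * (z : ℂ) := rfl

lemma num_apply' (g : SL(2,ℤ)) (z : ℍ) :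
    UpperHalfPlane.num (g : GL(2,ℝ)⁺) z = (g.1 0 0 : ℂ) * z + (g.1 0 1 : ℂ) := by
  simp [UpperHalfPlane.num, UpperHalfPlane.coe]


lemma denom_conj (d : ℕ) (γ : SL(2,ℤ)) (hc : ((d:ℤ)) ∣ γ.1 1 0) (z : ℍ)
    (p : (0:ℝ) < (d:ℕ)) :
    UpperHalfPlane.denom (γ : GL(2,ℝ)⁺) z
      = UpperHalfPlane.denom ((conjD d γ hc : SL(2,ℤ)) : GL(2,ℝ)⁺) (scaleH (d:ℝ) p z) := by
  show (γ.1 1 0 : ℂ) * z + (γ.1 1 1 : ℂ) = ((conjD d γ hc).1 1 0 : ℂ) * (scaleH (d:ℝ) p z : ℂ)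
    + ((conjD d γ hc).1 1 1 : ℂ)
  have h2 : ((d:ℂ)) * ((γ.1 1 0 / (d:ℤ) : ℤ) : ℂ) = (γ.1 1 0 : ℂ) := by
    exact_mod_cast congrArg (Int.cast : ℤ → ℂ) (Int.mul_ediv_cancel' hc)
  simp only [conjD, mkSL_10, mkSL_11, scaleH_coe]
  push_cast
  linear_combination -(z : ℂ) * h2

lemma smul_conj (d : ℕ) (γ : SL(2,ℤ)) (hc : ((d:ℤ)) ∣ γ.1 1 0) (z : ℍ)
    (p : (0:ℝ) < (d:ℕ)) :
    scaleH (d:ℝ) p ((γ : GL(2,ℝ)⁺) • z)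
      = ((conjD d γ hc : SL(2,ℤ)) : GL(2,ℝ)⁺) • scaleH (d:ℝ) p z := by
  apply UpperHalfPlane.ext
  have h1 : (((γ : GL(2,ℝ)⁺) • z : ℍ) : ℂ)
      = num (γ : GL(2,ℝ)⁺) z / denom (γ : GL(2,ℝ)⁺) z :=
    UpperHalfPlane.coe_smul_of_det_pos (γ : GL(2,ℝ)⁺).2 z
  have h2 : ((((conjD d γ hc : SL(2,ℤ)) : GL(2,ℝ)⁺) • scaleH (d:ℝ) p z : ℍ) : ℂ)
      = num ((conjD d γ hc : SL(2,ℤ)) : GL(2,ℝ)⁺) (scaleH (d:ℝ) p z)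
        / denom ((conjD d γ hc : SL(2,ℤ)) : GL(2,ℝ)⁺) (scaleH (d:ℝ) p z) :=
    UpperHalfPlane.coe_smul_of_det_pos ((conjD d γ hc : SL(2,ℤ)) : GL(2,ℝ)⁺).2 _
  rw [scaleH_coe, h1, h2,
    ← denom_conj d γ hc z p, num_apply', num_apply', mul_div_assoc']
  congr 1
  simp only [conjD, mkSL_00, mkSL_01, scaleH_coe]
  push_cast
  ring

lemma slash_conj (d : ℕ) (hd : 0 < d) (k : ℕ) (f : ℍ → ℂ) (γ : SL(2,ℤ))
    (hc : ((d:ℤ)) ∣ γ.1 1 0) :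
    (slashBd d hd k f) ∣[(k:ℤ)] γ = slashBd d hd k (f ∣[(k:ℤ)] conjD d γ hc) := by
  funext z
  simp only [ModularForm.SL_slash_apply, slashBd]
  have e1 : scaleH (d:ℝ) (by exact_mod_cast hd) (γ • z)
      = conjD d γ hc • scaleH (d:ℝ) (by exact_mod_cast hd) z := smul_conj d γ hc z _
  have e2 : UpperHalfPlane.denom γ z
      = UpperHalfPlane.denom (conjD d γ hc) (scaleH (d:ℝ) (by exact_mod_cast hd) z) :=
    denom_conj d γ hc z _
  rw [e1, e2]
  push_cast
  ring

lemma slashBd_sum (d : ℕ) (hd : 0 < d) (k : ℕ) (s : Finset SL(2,ℤ)) (F : SL(2,ℤ) → ℍ → ℂ) :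
    slashBd d hd k (∑ γ ∈ s, F γ) = ∑ γ ∈ s, slashBd d hd k (F γ) := by
  funext z
  simp [slashBd, Finset.sum_apply, Finset.mul_sum]

end Aux

section Main

open Matrix Matrix.SpecialLinearGroup CongruenceSubgroup Finset

/-- Let `q` be a prime dividing `N` and `d` a positive integer coprime to `q`.  For any cusp
form `f` of weight `k` for `Γ0(N)`: `Tr^{Nd}_{Nd/q}(f∣[k]B_d) = (Tr^N_{N/q}(f))∣[k]B_d`,
traces being computed with any choices of coset representatives. -/
theorem statement9 (k N d q : ℕ) (hk : 0 < k) (hN : 0 < N) (hd : 0 < d)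
    (hq : q.Prime) (hqN : q ∣ N) (hdq : Nat.gcd d q = 1)
    (f : UpperHalfPlane → ℂ) (hf : IsCuspForm N (k : ℤ) f)
    (R₁ R₂ : Finset SL(2, ℤ))
    (h₁ : IsGamma0Reps (N * d) (N * d / q) R₁) (h₂ : IsGamma0Reps N (N / q) R₂) :
    ∑ γ ∈ R₁, (slashBd d hd k f) ∣[(k : ℤ)] γ
      = slashBd d hd k (∑ γ ∈ R₂, f ∣[(k : ℤ)] γ) := by
  classical
  obtain ⟨F, hF⟩ := hf
  have hdz : (d:ℤ) ≠ 0 := by exact_mod_cast hd.ne'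
  have hinv : ∀ δ : SL(2,ℤ), δ ∈ Gamma0 N → f ∣[(k:ℤ)] δ = f := by
    intro δ hδ
    rw [← hF]
    exact SlashInvariantForm.slash_action_eqn F δ (Subgroup.mem_map_of_mem _ hδ)
  have hNdq : N * d / q = (N / q) * d := by
    conv_lhs => rw [← Nat.div_mul_cancel hqN]
    rw [Nat.mul_comm (N/q) q, Nat.mul_assoc, Nat.mul_div_cancel_left _ hq.pos]
  -- divisibility facts for elements of R₁
  have key : ∀ γ ∈ R₁, (d:ℤ) ∣ γ.1 1 0 := by
    intro γ hγ
    have := (mem_Gamma0_iff _ γ).mp (h₁.1 γ hγ)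
    rw [hNdq, Nat.cast_mul] at this
    exact (dvd_mul_left (d:ℤ) ((N/q : ℕ):ℤ)).trans this
  have key2 : ∀ γ (hγ : γ ∈ R₁), conjD d γ (key γ hγ) ∈ Gamma0 (N / q) := by
    intro γ hγ
    have hmem := (mem_Gamma0_iff _ γ).mp (h₁.1 γ hγ)
    rw [hNdq, Nat.cast_mul] at hmem
    obtain ⟨m, hm⟩ := hmem
    rw [mem_Gamma0_iff]
    simp only [conjD, mkSL_10]
    refine ⟨m, ?_⟩
    rw [hm]
    rw [show ((N/q:ℕ):ℤ) * (d:ℤ) * m = (d:ℤ) * (((N/q:ℕ):ℤ) * m) by ring,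
      Int.mul_ediv_cancel_left _ hdz]
  -- the trace over R₂ rewritten as a sum of slashBd's
  rw [slashBd_sum]
  refine Finset.sum_bij (fun γ hγ => (h₂.2 _ (key2 γ hγ)).choose) ?_ ?_ ?_ ?_
  · intro a ha
    exact (h₂.2 _ (key2 a ha)).choose_spec.1.1
  · -- injectivity
    intro a₁ ha₁ a₂ ha₂ heq
    set g := (h₂.2 _ (key2 a₁ ha₁)).choose with hg
    have s1 := (h₂.2 _ (key2 a₁ ha₁)).choose_spec.1.2
    have s2 := (h₂.2 _ (key2 a₂ ha₂)).choose_spec.1.2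
    have heq' : (h₂.2 _ (key2 a₁ ha₁)).choose = (h₂.2 _ (key2 a₂ ha₂)).choose := heq
    rw [← heq', ← hg] at s2
    have hmem : conjD d a₁ (key a₁ ha₁) * (conjD d a₂ (key a₂ ha₂))⁻¹ ∈ Gamma0 N := by
      have : conjD d a₁ (key a₁ ha₁) * (conjD d a₂ (key a₂ ha₂))⁻¹
          = (conjD d a₁ (key a₁ ha₁) * g⁻¹) * (conjD d a₂ (key a₂ ha₂) * g⁻¹)⁻¹ := by
        group
      rw [this]
      exact mul_mem s1 (inv_mem s2)
    have hdvd : ((N*d : ℕ):ℤ) ∣ (a₁ * a₂⁻¹).1 1 0 := by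
      rw [conj_lowerleft (d:ℤ) a₁ a₂ (key a₁ ha₁) (key a₂ ha₂)]
      have := (mem_Gamma0_iff N _).mp hmem
      push_cast
      rw [mul_comm ((N:ℤ)) ((d:ℤ))]
      exact mul_dvd_mul_left _ this
    have hGamma : a₁ * a₂⁻¹ ∈ Gamma0 (N * d) := (mem_Gamma0_iff _ _).mpr hdvd
    exact ExistsUnique.unique (h₁.2 a₁ (h₁.1 a₁ ha₁))
      ⟨ha₁, by rw [mul_inv_cancel]; exact one_mem _⟩ ⟨ha₂, hGamma⟩
  · -- surjectivity
    intro b hb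
    have hb2 : ((N/q : ℕ) : ℤ) ∣ b.1 1 0 := (mem_Gamma0_iff _ b).mp (h₂.1 b hb)
    obtain ⟨u, hu1, hu2⟩ := exists_u N q d hN hq hqN hdq b hb2
    set w := u * b with hw
    have hwb : (d:ℤ) ∣ w.1 0 1 := hu2
    have hw10 : ((N/q : ℕ):ℤ) ∣ w.1 1 0 := by
      rw [hw, mul_10]
      refine dvd_add (Dvd.dvd.mul_right ?_ _) (Dvd.dvd.mul_left hb2 _)
      exact dvd_trans (Int.natCast_dvd_natCast.mpr (Nat.div_dvd_of_dvd hqN)) hu1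
    set ψ := conjU (d:ℤ) hdz w hwb with hψdef
    have hψc : (d:ℤ) ∣ ψ.1 1 0 := by
      rw [hψdef]; simp only [conjU, mkSL_10]; exact Dvd.intro_left _ rfl
    have hψmem : ψ ∈ Gamma0 (N * d / q) := by
      rw [mem_Gamma0_iff, hNdq, Nat.cast_mul, hψdef]
      simp only [conjU, mkSL_10]
      exact mul_dvd_mul hw10 dvd_rfl
    set A := (h₁.2 ψ hψmem).choose with hA
    have sA := (h₁.2 ψ hψmem).choose_spec.1
    have hAR : A ∈ R₁ := sA.1
    refine ⟨A, hAR, ?_⟩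
    -- show the chosen representative for A is b
    have hconj : conjD (d:ℤ) ψ hψc = w := conjD_conjU (d:ℤ) hdz w hwb hψc
    have h2' : A * ψ⁻¹ ∈ Gamma0 (N * d) := by
      have := inv_mem sA.2
      rwa [_root_.mul_inv_rev, inv_inv] at this
    have hNdvd : (N:ℤ) ∣ (conjD d A (key A hAR) * w⁻¹).1 1 0 := by
      have hdvd := (mem_Gamma0_iff _ _).mp h2'
      rw [conj_lowerleft (d:ℤ) A ψ (key A hAR) hψc, hconj] at hdvd
      push_cast at hdvd
      rw [mul_comm ((N:ℤ)) ((d:ℤ))] at hdvd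
      exact (mul_dvd_mul_iff_left hdz).mp hdvd
    have hfinal : conjD d A (key A hAR) * b⁻¹ ∈ Gamma0 N := by
      have hrw : conjD d A (key A hAR) * b⁻¹ = (conjD d A (key A hAR) * w⁻¹) * u := by
        rw [hw]; group
      rw [hrw]
      exact mul_mem ((mem_Gamma0_iff _ _).mpr hNdvd) ((mem_Gamma0_iff _ _).mpr hu1)
    exact ((h₂.2 _ (key2 A hAR)).choose_spec.2 b ⟨hb, hfinal⟩).symm
  · -- the summands agree
    intro a ha
    have s1 := (h₂.2 _ (key2 a ha)).choose_spec.1.2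
    have hcalc : f ∣[(k:ℤ)] conjD d a (key a ha)
        = f ∣[(k:ℤ)] (h₂.2 _ (key2 a ha)).choose := by
      calc f ∣[(k:ℤ)] conjD d a (key a ha)
          = f ∣[(k:ℤ)] ((conjD d a (key a ha) * ((h₂.2 _ (key2 a ha)).choose)⁻¹)
              * (h₂.2 _ (key2 a ha)).choose) := by rw [inv_mul_cancel_right]
        _ = (f ∣[(k:ℤ)] (conjD d a (key a ha) * ((h₂.2 _ (key2 a ha)).choose)⁻¹))
              ∣[(k:ℤ)] (h₂.2 _ (key2 a ha)).choose := by rw [SlashAction.slash_mul]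
        _ = f ∣[(k:ℤ)] (h₂.2 _ (key2 a ha)).choose := by rw [hinv _ s1]
    rw [slash_conj d hd k f a (key a ha), hcalc]

end Main
end

section
/- Let M, N, k be positive integers with M ∣ N, let g be a cusp form of weight k for Γ0(N), let μ = [Γ0(M) : Γ0(N)] be the (finite) index, and let i be an integer with 1 ≤ i ≤ μ. For any finite set R ⊂ Γ0(M) of representatives of the right cosets Γ0(N)\Γ0(M), define s_i(g)(z) to be the i-th elementary symmetric polynomial evaluated at the μ complex numbers (g∣[k]γ)(z), γ ∈ R. Then s_i(g) does not depend on the choice of R, and s_i(g) is a cusp form of weight k·i for Γ0(M). -/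
open Complex UpperHalfPlane
open scoped MatrixGroups ModularForm Manifold

/-- `s_i(g)` computed from the set `R` of coset representatives: the `i`-th elementary
symmetric polynomial of the values `(g∣[k]γ)(z)`, `γ ∈ R`. -/
noncomputable def symCoeff (k : ℤ) (g : UpperHalfPlane → ℂ) (R : Finset SL(2, ℤ)) (i : ℕ) :
    UpperHalfPlane → ℂ :=
  fun z => (R.val.map fun γ => (g ∣[k] γ) z).esymm i

/- ## Auxiliary lemmas -/

section Aux

set_option synthInstance.maxHeartbeats 1000000
set_option maxHeartbeats 1000000

open ModularForm CongruenceSubgroup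

/-- Multiset sum of functions, applied pointwise. -/
lemma aux_sum_apply (s : Multiset (ℍ → ℂ)) (z : ℍ) :
    s.sum z = (s.map (fun f => f z)).sum := by
  induction s using Multiset.induction_on with
  | empty => simp
  | cons a m ih => simp [ih]

/-- Multiset product of functions, applied pointwise. -/
lemma aux_prod_apply (s : Multiset (ℍ → ℂ)) (z : ℍ) :
    s.prod z = (s.map (fun f => f z)).prod := by
  induction s using Multiset.induction_on with
  | empty => simp
  | cons a m ih => simp [ih]

/-- Pointwise evaluation commutes with `esymm`. -/
lemma aux_esymm_apply (m : Multiset (ℍ → ℂ)) (i : ℕ) (z : ℍ) :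
    (m.esymm i) z = (m.map (fun f => f z)).esymm i := by
  simp only [Multiset.esymm, Multiset.powersetCard_map, Multiset.map_map]
  rw [aux_sum_apply, Multiset.map_map]
  refine congrArg _ (Multiset.map_congr rfl fun t _ => ?_)
  exact aux_prod_apply t z

/-- `symCoeff` as an `esymm` of a multiset of functions. -/
lemma symCoeff_eq (k : ℤ) (g : ℍ → ℂ) (R : Finset SL(2, ℤ)) (i : ℕ) :
    symCoeff k g R i = (R.val.map (fun γ => g ∣[k] γ)).esymm i := by
  funext z
  rw [symCoeff, aux_esymm_apply, Multiset.map_map]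
  rfl

/-- Slash of a multiset sum. -/
lemma aux_sum_slash (w : ℤ) (A : SL(2, ℤ)) (s : Multiset (ℍ → ℂ)) :
    s.sum ∣[w] A = (s.map (· ∣[w] A)).sum := by
  induction s using Multiset.induction_on with
  | empty => simpa using SlashAction.zero_slash w A
  | cons a m ih => simp [SlashAction.add_slash, ih]

/-- Slash of a multiset product. -/
lemma aux_prod_slash (k : ℤ) (A : SL(2, ℤ)) (m : Multiset (ℍ → ℂ)) :
    m.prod ∣[k * (m.card : ℤ)] A = (m.map (· ∣[k] A)).prod := by
  induction m using Multiset.induction_on with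
  | empty => simpa using ModularForm.is_invariant_one A
  | cons a m ih =>
      have hw : k * (((a ::ₘ m).card : ℕ) : ℤ) = k + k * (m.card : ℤ) := by
        simp [Multiset.card_cons]; ring
      rw [Multiset.prod_cons, hw, ModularForm.mul_slash_SL2, ih, Multiset.map_cons,
        Multiset.prod_cons]

/-- Slash of `esymm`. -/
lemma aux_esymm_slash (k : ℤ) (i : ℕ) (A : SL(2, ℤ)) (m : Multiset (ℍ → ℂ)) :
    (m.esymm i) ∣[k * (i : ℤ)] A = (m.map (· ∣[k] A)).esymm i := by
  simp only [Multiset.esymm, Multiset.powersetCard_map, Multiset.map_map]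
  rw [aux_sum_slash, Multiset.map_map]
  refine congrArg _ (Multiset.map_congr rfl fun t ht => ?_)
  have hc : t.card = i := (Multiset.mem_powersetCard.mp ht).2
  have := aux_prod_slash k A t
  rw [hc] at this
  exact this

/-- The key bijection lemma: the multiset of functions `g∣[k](γA)` over a set of
representatives does not depend on the representatives (for `A ∈ Γ0(M)`). -/
lemma aux_reps_map_eq {N M : ℕ} (k : ℤ) (F : CuspForm (Gamma0 N) k)
    {R R' : Finset SL(2, ℤ)} (hR : IsGamma0Reps N M R) (hR' : IsGamma0Reps N M R')
    (A : SL(2, ℤ)) (hA : A ∈ Gamma0 M) :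
    R.val.map (fun γ => (⇑F) ∣[k] (γ * A)) = R'.val.map (fun γ => (⇑F) ∣[k] γ) := by
  have hmem : ∀ a ∈ R, a * A ∈ Gamma0 M := fun a ha => mul_mem (hR.1 a ha) hA
  refine Multiset.map_eq_map_of_bij_of_nodup _ _ R.nodup R'.nodup
    (fun a ha => (hR'.2 (a * A) (hmem a ha)).choose) (fun a ha => ?_) ?_ ?_ ?_
  · exact (hR'.2 (a * A) (hmem a ha)).choose_spec.1.1
  · -- injectivity
    intro a₁ ha₁ a₂ ha₂ h
    dsimp only at h
    have h1 : (a₁ * A) * ((hR'.2 (a₁ * A) (hmem a₁ ha₁)).choose)⁻¹ ∈ Gamma0 N :=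
      (hR'.2 (a₁ * A) (hmem a₁ ha₁)).choose_spec.1.2
    have h2 : (a₂ * A) * ((hR'.2 (a₁ * A) (hmem a₁ ha₁)).choose)⁻¹ ∈ Gamma0 N := by
      have := (hR'.2 (a₂ * A) (hmem a₂ ha₂)).choose_spec.1.2
      rwa [← h] at this
    have h12 : a₁ * a₂⁻¹ ∈ Gamma0 N := by
      have := mul_mem h1 (inv_mem h2)
      simpa [mul_assoc] using this
    obtain ⟨γ₀, _, huniq⟩ := hR.2 a₁ (hR.1 a₁ ha₁)
    have e1 : a₁ = γ₀ := huniq a₁ ⟨ha₁, by simpa using one_mem (Gamma0 N)⟩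
    have e2 : a₂ = γ₀ := huniq a₂ ⟨ha₂, h12⟩
    rw [e1, e2]
  · -- surjectivity
    intro b hb
    obtain ⟨a, ⟨haR, haN⟩, _⟩ := hR.2 (b * A⁻¹) (mul_mem (hR'.1 b hb) (inv_mem hA))
    refine ⟨a, haR, ?_⟩
    have hcand : (a * A) * b⁻¹ ∈ Gamma0 N := by
      have := inv_mem haN
      simpa [mul_assoc, mul_inv_rev] using this
    exact ((hR'.2 (a * A) (hmem a haR)).choose_spec.2 b ⟨hb, hcand⟩).symm
  · -- functions agree
    intro a ha
    dsimp only
    have hτ : (a * A) * ((hR'.2 (a * A) (hmem a ha)).choose)⁻¹ ∈ Gamma0 N :=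
      (hR'.2 (a * A) (hmem a ha)).choose_spec.1.2
    have hdec : a * A = ((a * A) * ((hR'.2 (a * A) (hmem a ha)).choose)⁻¹)
        * (hR'.2 (a * A) (hmem a ha)).choose := by group
    have key : (⇑F) ∣[k] (((a * A) * ((hR'.2 (a * A) (hmem a ha)).choose)⁻¹)
        * (hR'.2 (a * A) (hmem a ha)).choose) = (⇑F) ∣[k] (hR'.2 (a * A) (hmem a ha)).choose := by
      rw [SlashAction.slash_mul, ModularForm.SL_slash (k := k) (⇑F)
        ((a * A) * ((hR'.2 (a * A) (hmem a ha)).choose)⁻¹)]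
      exact congrArg (· ∣[k] _) (SlashInvariantForm.slash_action_eqn F _ (Subgroup.mem_map_of_mem _ hτ))
    rw [← hdec] at key
    exact key

/-- Möbius action of `GL(2,ℝ)⁺` on `ℍ` is holomorphic. -/
lemma aux_mdiff_smul (A : GL(2, ℝ)⁺) :
    MDifferentiable 𝓘(ℂ) 𝓘(ℂ) (fun z : ℍ => (A • z : ℍ)) := by
  exact mdifferentiable_smul (g := (A : GL (Fin 2) ℝ)) A.2

/-- The slash action preserves holomorphy. -/
lemma aux_mdiff_slash {f : ℍ → ℂ} (hf : MDifferentiable 𝓘(ℂ) 𝓘(ℂ) f) (k : ℤ)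
    (A : GL (Fin 2) ℝ) : MDifferentiable 𝓘(ℂ) 𝓘(ℂ) (f ∣[k] A) := by
  exact hf.slash k A

lemma aux_mdiff_multiset_sum (s : Multiset (ℍ → ℂ))
    (h : ∀ f ∈ s, MDifferentiable 𝓘(ℂ) 𝓘(ℂ) f) :
    MDifferentiable 𝓘(ℂ) 𝓘(ℂ) s.sum := by
  induction s using Multiset.induction_on with
  | empty => simpa [Pi.zero_def] using (mdifferentiable_const : MDifferentiable 𝓘(ℂ) 𝓘(ℂ) fun _ : ℍ => (0 : ℂ))
  | cons a m ih =>
      rw [Multiset.sum_cons]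
      exact (h a (Multiset.mem_cons_self a m)).add
        (ih fun f hf => h f (Multiset.mem_cons_of_mem hf))

lemma aux_mdiff_multiset_prod (s : Multiset (ℍ → ℂ))
    (h : ∀ f ∈ s, MDifferentiable 𝓘(ℂ) 𝓘(ℂ) f) :
    MDifferentiable 𝓘(ℂ) 𝓘(ℂ) s.prod := by
  induction s using Multiset.induction_on with
  | empty => simpa [Pi.one_def] using (mdifferentiable_const : MDifferentiable 𝓘(ℂ) 𝓘(ℂ) fun _ : ℍ => (1 : ℂ))
  | cons a m ih =>
      rw [Multiset.prod_cons]
      exact (h a (Multiset.mem_cons_self a m)).mul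
        (ih fun f hf => h f (Multiset.mem_cons_of_mem hf))

lemma aux_zero_at_prod (s : Multiset (ℍ → ℂ)) (hs : s ≠ 0)
    (h : ∀ f ∈ s, IsZeroAtImInfty f) : IsZeroAtImInfty s.prod := by
  induction s using Multiset.induction_on with
  | empty => exact absurd rfl hs
  | cons a m ih =>
      rw [Multiset.prod_cons]
      rcases eq_or_ne m 0 with hm | hm
      · subst hm
        simpa using h a (Multiset.mem_cons_self a 0)
      · have ha' : Filter.Tendsto a atImInfty (nhds 0) := h a (Multiset.mem_cons_self a m)
        have hp' : Filter.Tendsto m.prod atImInfty (nhds 0) :=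
          ih hm fun f hf => h f (Multiset.mem_cons_of_mem hf)
        have : Filter.Tendsto (fun z => a z * m.prod z) atImInfty (nhds 0) := by
          simpa using ha'.mul hp'
        exact this

lemma aux_zero_at_sum (s : Multiset (ℍ → ℂ))
    (h : ∀ f ∈ s, IsZeroAtImInfty f) : IsZeroAtImInfty s.sum := by
  induction s using Multiset.induction_on with
  | empty => simpa [IsZeroAtImInfty, Filter.ZeroAtFilter, Pi.zero_def] using (tendsto_const_nhds : Filter.Tendsto (fun _ : ℍ => (0 : ℂ)) _ _)
  | cons a m ih =>
      rw [Multiset.sum_cons]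
      have ha' : Filter.Tendsto a atImInfty (nhds 0) := h a (Multiset.mem_cons_self a m)
      have hp' : Filter.Tendsto m.sum atImInfty (nhds 0) :=
        ih fun f hf => h f (Multiset.mem_cons_of_mem hf)
      have : Filter.Tendsto (fun z => a z + m.sum z) atImInfty (nhds 0) := by
        simpa using ha'.add hp'
      exact this

/-- Slash of `symCoeff` by any `A : SL(2,ℤ)`. -/
lemma aux_symCoeff_slash (k : ℤ) (g : ℍ → ℂ) (R : Finset SL(2, ℤ)) (i : ℕ) (A : SL(2, ℤ)) :
    (symCoeff k g R i) ∣[k * (i : ℤ)] A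
      = (R.val.map (fun γ => g ∣[k] (γ * A))).esymm i := by
  rw [symCoeff_eq, aux_esymm_slash, Multiset.map_map]
  refine congrArg (fun m => Multiset.esymm m i) (Multiset.map_congr rfl fun γ _ => ?_)
  simp only [Function.comp_apply]
  rw [SlashAction.slash_mul]

end Aux

/-- Let `M ∣ N`, let `g` be a cusp form of weight `k` for `Γ0(N)`, let
`μ = [Γ0(M) : Γ0(N)]`, and let `1 ≤ i ≤ μ`.  Then the `i`-th elementary symmetric
polynomial `s_i(g)` of the `μ` functions `g∣[k]γ`, `γ` ranging over a set of
representatives of `Γ0(N)\Γ0(M)`, does not depend on the choice of representatives,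
and `s_i(g)` is a cusp form of weight `k·i` for `Γ0(M)`. -/
theorem statement10 (k M N : ℕ) (hk : 0 < k) (hM : 0 < M) (hN : 0 < N) (hMN : M ∣ N)
    (g : UpperHalfPlane → ℂ) (hg : IsCuspForm N (k : ℤ) g)
    (i : ℕ) (hi1 : 1 ≤ i)
    (hiμ : i ≤ (CongruenceSubgroup.Gamma0 N).relIndex (CongruenceSubgroup.Gamma0 M)) :
    (∀ R R' : Finset SL(2, ℤ), IsGamma0Reps N M R → IsGamma0Reps N M R' →
      symCoeff (k : ℤ) g R i = symCoeff (k : ℤ) g R' i) ∧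
    (∀ R : Finset SL(2, ℤ), IsGamma0Reps N M R →
      IsCuspForm M ((k : ℤ) * (i : ℤ)) (symCoeff (k : ℤ) g R i)) := by
  obtain ⟨F, hgF⟩ := hg
  subst hgF
  have key : ∀ (R R' : Finset SL(2, ℤ)), IsGamma0Reps N M R → IsGamma0Reps N M R' →
      ∀ A : SL(2, ℤ), A ∈ CongruenceSubgroup.Gamma0 M →
      (R.val.map (fun γ => (⇑F) ∣[(k : ℤ)] (γ * A))).esymm i
        = (R'.val.map (fun γ => (⇑F) ∣[(k : ℤ)] γ)).esymm i := by
    intro R R' hR hR' A hA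
    rw [aux_reps_map_eq (k : ℤ) F hR hR' A hA]
  constructor
  · intro R R' hR hR'
    rw [symCoeff_eq, symCoeff_eq, ← key R R' hR hR' 1 (one_mem _)]
    refine congrArg (fun m => Multiset.esymm m i) (Multiset.map_congr rfl fun γ _ => ?_)
    rw [mul_one]
  · intro R hR
    refine ⟨⟨⟨symCoeff (k : ℤ) (⇑F) R i, ?_⟩, ?_, ?_⟩, rfl⟩
    · -- slash invariance
      intro A hA
      obtain ⟨A, hA', rfl⟩ := Subgroup.mem_map.mp hA
      change symCoeff (k : ℤ) (⇑F) R i ∣[(k : ℤ) * (i : ℤ)] A = _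
      rw [aux_symCoeff_slash, key R R hR hR A hA', symCoeff_eq]
    · -- holomorphy
      show MDifferentiable 𝓘(ℂ) 𝓘(ℂ) (symCoeff (k : ℤ) (⇑F) R i)
      rw [symCoeff_eq, Multiset.esymm]
      apply aux_mdiff_multiset_sum
      intro f hf
      obtain ⟨t, ht, rfl⟩ := Multiset.mem_map.mp hf
      apply aux_mdiff_multiset_prod
      intro h hh
      have : h ∈ R.val.map (fun γ => (⇑F) ∣[(k : ℤ)] γ) :=
        Multiset.mem_of_le (Multiset.mem_powersetCard.mp ht).1 hh
      obtain ⟨γ, _, rfl⟩ := Multiset.mem_map.mp this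
      rw [ModularForm.SL_slash]
      exact aux_mdiff_slash F.holo' (k : ℤ) _
    · -- zero at infinity
      intro c hc
      haveI : NeZero M := ⟨hM.ne'⟩
      haveI : NeZero N := ⟨hN.ne'⟩
      rw [Subgroup.IsArithmetic.isCusp_iff_isCusp_SL2Z] at hc
      rw [OnePoint.isZeroAt_iff_forall_SL2Z hc]
      intro A _
      show IsZeroAtImInfty ((symCoeff (k : ℤ) (⇑F) R i) ∣[(k : ℤ) * (i : ℤ)] A)
      rw [aux_symCoeff_slash, Multiset.esymm]
      apply aux_zero_at_sum
      intro f hf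
      obtain ⟨t, ht, rfl⟩ := Multiset.mem_map.mp hf
      have hcard : t.card = i := (Multiset.mem_powersetCard.mp ht).2
      have htne : t ≠ 0 := by
        intro h0
        rw [h0] at hcard
        simp at hcard
        omega
      apply aux_zero_at_prod t htne
      intro h hh
      have : h ∈ R.val.map (fun γ => (⇑F) ∣[(k : ℤ)] (γ * A)) :=
        Multiset.mem_of_le (Multiset.mem_powersetCard.mp ht).1 hh
      obtain ⟨γ, _, rfl⟩ := Multiset.mem_map.mp this
      exact CuspFormClass.zero_at_infty_slash F (γ * A)
end
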